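/- Fix k ≥ 1 and n = 3k + 1. Let G be the 𝒞-suspension of the path P_n over the maximal independent set 𝒞 = {x_1, x_4, ..., x_{3k+1}}. Then P_G(−1) = (−1)^{k+1}; in particular P_G(−1) ≠ 0. -/

import Mathlib

open scoped Classical

/-- A finset of vertices is independent: no two of its members are adjacent. -/
def IsIndepFinset {V : Type*} (G : SimpleGraph V) (s : Finset V) : Prop :=
  ∀ a ∈ s, ∀ b ∈ s, ¬ G.Adj a b

/-- The independence polynomial of `G`, evaluated at `x : ℤ`:
`P_G(x) = Σ_i g_i x^i` where `g_i` is the number of independent sets of size `i`. -/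
noncomputable def indepPolynomial {V : Type*} [Fintype V] (G : SimpleGraph V) (x : ℤ) : ℤ :=
  ∑ s ∈ Finset.univ.filter (fun s : Finset V => IsIndepFinset G s), x ^ s.card

/-- The independence number of `G`. -/
noncomputable def indepNumber {V : Type*} [Fintype V] (G : SimpleGraph V) : ℕ :=
  (Finset.univ.filter (fun s : Finset V => IsIndepFinset G s)).sup Finset.card

/-- The `C`-suspension of `G`: adjoin a new vertex (`none`) adjacent exactly to `C`. -/
def susp {V : Type*} (G : SimpleGraph V) (C : Set V) : SimpleGraph (Option V) where
  Adj a b :=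
    match a, b with
    | some a, some b => G.Adj a b
    | some a, none => a ∈ C
    | none, some b => b ∈ C
    | none, none => False
  symm := by
    constructor
    rintro (_ | a) (_ | b) h
    · exact h
    · exact h
    · exact h
    · exact h.symm
  loopless := by
    constructor
    rintro (_ | a) h
    · exact h
    · exact G.irrefl h

namespace Stmt17Aux

open Finset

noncomputable def cfilter {α : Type*} [Fintype α] (P : α → Prop) : Finset α :=
  @Finset.filter α P (fun a => Classical.propDecidable _) Finset.univ

lemma filter_eq_cfilter {α : Type*} [Fintype α] (P : α → Prop) [inst : DecidablePred P] :
    Finset.univ.filter P = cfilter P := by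
  unfold cfilter
  congr 1

lemma indepPolynomial_eq {V : Type*} [Fintype V] (G : SimpleGraph V) (x : ℤ) :
    indepPolynomial G x = ∑ s ∈ cfilter (fun s : Finset V => IsIndepFinset G s), x ^ s.card :=
  rfl

/-- no two consecutive naturals -/
def NC (s : Finset ℕ) : Prop := ∀ i ∈ s, i + 1 ∉ s

noncomputable def wsum (P : Finset ℕ → Prop) (n : ℕ) : ℤ :=
  ∑ s ∈ (Finset.range n).powerset, if P s then (-1 : ℤ) ^ s.card else 0

lemma powerset_split (f : Finset ℕ → ℤ) (n : ℕ) :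
    ∑ s ∈ (Finset.range (n + 1)).powerset, f s
      = ∑ s ∈ (Finset.range n).powerset, f s
        + ∑ s ∈ (Finset.range n).powerset, f (insert n s) := by
  have hnot : ∀ s ∈ (Finset.range n).powerset, n ∉ s := by
    intro s hs h
    exact absurd (Finset.mem_range.mp (Finset.mem_powerset.mp hs h)) (lt_irrefl n)
  rw [Finset.range_add_one, Finset.powerset_insert, Finset.sum_union, Finset.sum_image]
  · intro x hx y hy hxy
    have hx' : n ∉ x := hnot x hx
    have hy' : n ∉ y := hnot y hy
    have := congrArg (fun t => Finset.erase t n) hxy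
    simpa [Finset.erase_insert hx', Finset.erase_insert hy'] using this
  · rw [Finset.disjoint_left]
    intro a ha hb
    obtain ⟨b, _, rfl⟩ := Finset.mem_image.mp hb
    exact hnot _ ha (Finset.mem_insert_self _ _)

lemma wsum_succ (P : Finset ℕ → Prop) (n : ℕ) :
    wsum P (n + 1) = wsum P n
      + ∑ s ∈ (Finset.range n).powerset,
          if P (insert n s) then (-1 : ℤ) ^ (s.card + 1) else 0 := by
  rw [wsum, powerset_split]
  congr 1
  apply Finset.sum_congr rfl
  intro s hs
  have hns : n ∉ s := fun h =>
    absurd (Finset.mem_range.mp (Finset.mem_powerset.mp hs h)) (lt_irrefl n)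
  rw [Finset.card_insert_of_notMem hns]

lemma wsum_congr {P Q : Finset ℕ → Prop} (n : ℕ)
    (h : ∀ s, s ⊆ Finset.range n → (P s ↔ Q s)) : wsum P n = wsum Q n := by
  apply Finset.sum_congr rfl
  intro s hs
  rw [if_congr (h s (Finset.mem_powerset.mp hs)) rfl rfl]

/-- dropping the top element when the predicate forbids it -/
lemma wsum_drop (P : Finset ℕ → Prop) (n : ℕ) :
    wsum (fun s => P s ∧ n ∉ s) (n + 1) = wsum P n := by
  rw [wsum_succ]
  simp only [Finset.mem_insert_self, not_true_eq_false, and_false, if_false,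
    Finset.sum_const_zero, add_zero]
  apply wsum_congr
  intro s hs
  have hns : n ∉ s := fun h => absurd (Finset.mem_range.mp (hs h)) (lt_irrefl n)
  tauto

lemma nc_insert {s : Finset ℕ} {m : ℕ} (hm : ∀ i ∈ s, i < m) :
    NC (insert m s) ↔ (NC s ∧ ∀ i ∈ s, i + 1 ≠ m) := by
  unfold NC
  constructor
  · intro h
    refine ⟨fun i hi hi1 => h i (mem_insert_of_mem hi) (mem_insert_of_mem hi1),
            fun i hi him => ?_⟩
    exact h i (mem_insert_of_mem hi) (him ▸ mem_insert_self m s)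
  · rintro ⟨h1, h2⟩ i hi
    rcases mem_insert.mp hi with rfl | hi'
    · intro hc
      rcases mem_insert.mp hc with h | h
      · omega
      · exact absurd (hm _ h) (by omega)
    · intro hc
      rcases mem_insert.mp hc with h | h
      · exact h2 i hi' h
      · exact h1 i hi' h

noncomputable def A (n : ℕ) : ℤ := wsum NC n

noncomputable def B (n : ℕ) : ℤ :=
  wsum (fun s => NC s ∧ ∀ i ∈ s, i % 3 ≠ 0) n

lemma mem_range_lt {s : Finset ℕ} {n : ℕ} (hs : s ∈ (Finset.range n).powerset) :
    ∀ i ∈ s, i < n := fun i hi =>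
  Finset.mem_range.mp (Finset.mem_powerset.mp hs hi)

lemma A_zero : A 0 = 1 := by
  simp [A, wsum, NC]

lemma A_one : A 1 = 0 := by
  rw [A, wsum_succ, show wsum NC 0 = 1 from A_zero]
  norm_num [NC]

lemma A_succ2 (n : ℕ) : A (n + 2) = A (n + 1) - A n := by
  rw [show n + 2 = (n + 1) + 1 from rfl, A, wsum_succ, ← A]
  have key : ∑ s ∈ (Finset.range (n + 1)).powerset,
      (if NC (insert (n + 1) s) then (-1 : ℤ) ^ (s.card + 1) else 0)
      = - wsum (fun s => NC s ∧ n ∉ s) (n + 1) := by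
    rw [wsum, ← Finset.sum_neg_distrib]
    apply Finset.sum_congr rfl
    intro s hs
    have hlt : ∀ i ∈ s, i < n + 1 := mem_range_lt hs
    have hiff : NC (insert (n + 1) s) ↔ (NC s ∧ n ∉ s) := by
      rw [nc_insert hlt]
      constructor
      · rintro ⟨h1, h2⟩
        exact ⟨h1, fun hn => h2 n hn rfl⟩
      · rintro ⟨h1, h2⟩
        refine ⟨h1, fun i hi he => h2 ?_⟩
        have : i = n := by omega
        exact this ▸ hi
    by_cases h : NC s ∧ n ∉ s
    · rw [if_pos (hiff.mpr h), if_pos h, pow_succ]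
      ring
    · rw [if_neg (fun hc => h (hiff.mp hc)), if_neg h, neg_zero]
  rw [key, wsum_drop, ← A]
  ring

lemma A_add3 (n : ℕ) : A (n + 3) = - A n := by
  have h1 := A_succ2 (n + 1)
  have h2 := A_succ2 n
  have : n + 1 + 2 = n + 3 := by omega
  rw [this] at h1
  linarith

lemma A_3k1 (k : ℕ) : A (3 * k + 1) = 0 := by
  induction k with
  | zero => simpa using A_one
  | succ k ih =>
      have : 3 * (k + 1) + 1 = (3 * k + 1) + 3 := by ring
      rw [this, A_add3, ih, neg_zero]

lemma B_3m1 (m : ℕ) : B (3 * m + 1) = B (3 * m) := by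
  rw [B, wsum_succ]
  simp only [Finset.forall_mem_insert, Nat.mul_mod_right, ne_eq, not_true_eq_false, false_and,
    and_false, if_false, Finset.sum_const_zero, add_zero]
  rfl

lemma B_3m2 (m : ℕ) : B (3 * m + 2) = 0 := by
  rw [B, show 3 * m + 2 = (3 * m + 1) + 1 from rfl, wsum_succ]
  beta_reduce
  have key : ∑ s ∈ (Finset.range (3 * m + 1)).powerset,
      (@ite ℤ (NC (insert (3 * m + 1) s) ∧ ∀ i ∈ insert (3 * m + 1) s, i % 3 ≠ 0)
        (Classical.propDecidable _) ((-1 : ℤ) ^ (s.card + 1)) 0)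
      = - wsum (fun s => NC s ∧ ∀ i ∈ s, i % 3 ≠ 0) (3 * m + 1) := by
    rw [wsum, ← Finset.sum_neg_distrib]
    apply Finset.sum_congr rfl
    intro s hs
    have hlt : ∀ i ∈ s, i < 3 * m + 1 := mem_range_lt hs
    have hiff : (NC (insert (3 * m + 1) s) ∧ ∀ i ∈ insert (3 * m + 1) s, i % 3 ≠ 0)
        ↔ (NC s ∧ ∀ i ∈ s, i % 3 ≠ 0) := by
      rw [nc_insert hlt, Finset.forall_mem_insert]
      constructor
      · rintro ⟨⟨h1, -⟩, -, h3⟩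
        exact ⟨h1, h3⟩
      · rintro ⟨h1, h2⟩
        refine ⟨⟨h1, fun i hi he => h2 i hi ?_⟩, by omega, h2⟩
        omega
    by_cases h : NC s ∧ ∀ i ∈ s, i % 3 ≠ 0
    · rw [if_pos (hiff.mpr h), if_pos h, pow_succ]
      ring
    · rw [if_neg (fun hc => h (hiff.mp hc)), if_neg h, neg_zero]
  rw [key]
  simp [B]

lemma B_3m3 (m : ℕ) : B (3 * m + 3) = - B (3 * m + 1) := by
  rw [B, show 3 * m + 3 = (3 * m + 2) + 1 from rfl, wsum_succ]
  beta_reduce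
  have key : ∑ s ∈ (Finset.range (3 * m + 2)).powerset,
      (@ite ℤ (NC (insert (3 * m + 2) s) ∧ ∀ i ∈ insert (3 * m + 2) s, i % 3 ≠ 0)
        (Classical.propDecidable _) ((-1 : ℤ) ^ (s.card + 1)) 0)
      = - wsum (fun s => (NC s ∧ ∀ i ∈ s, i % 3 ≠ 0) ∧ 3 * m + 1 ∉ s) (3 * m + 2) := by
    rw [wsum, ← Finset.sum_neg_distrib]
    apply Finset.sum_congr rfl
    intro s hs
    have hlt : ∀ i ∈ s, i < 3 * m + 2 := mem_range_lt hs
    have hiff : (NC (insert (3 * m + 2) s) ∧ ∀ i ∈ insert (3 * m + 2) s, i % 3 ≠ 0)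
        ↔ ((NC s ∧ ∀ i ∈ s, i % 3 ≠ 0) ∧ 3 * m + 1 ∉ s) := by
      rw [nc_insert hlt, Finset.forall_mem_insert]
      constructor
      · rintro ⟨⟨h1, h2⟩, -, h3⟩
        refine ⟨⟨h1, h3⟩, fun hmem => h2 _ hmem (by omega)⟩
      · rintro ⟨⟨h1, h2⟩, h3⟩
        refine ⟨⟨h1, fun i hi he => h3 ?_⟩, by omega, h2⟩
        have : i = 3 * m + 1 := by omega
        exact this ▸ hi
    by_cases h : (NC s ∧ ∀ i ∈ s, i % 3 ≠ 0) ∧ 3 * m + 1 ∉ s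
    · rw [if_pos (hiff.mpr h), if_pos h, pow_succ]
      ring
    · rw [if_neg (fun hc => h (hiff.mp hc)), if_neg h, neg_zero]
  rw [key, wsum_drop]
  rw [show wsum (fun s => NC s ∧ ∀ i ∈ s, i % 3 ≠ 0) (3 * m + 2) = B (3 * m + 2) from rfl]
  rw [show wsum (fun s => NC s ∧ ∀ i ∈ s, i % 3 ≠ 0) (3 * m + 1) = B (3 * m + 1) from rfl]
  rw [B_3m2]
  ring

lemma B_zero : B 0 = 1 := by
  simp [B, wsum, NC]

lemma B_3k1 (k : ℕ) : B (3 * k + 1) = (-1 : ℤ) ^ k := by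
  induction k with
  | zero =>
      have h := B_3m1 0
      norm_num at h ⊢
      rw [h, B_zero]
  | succ k ih =>
      have h1 : B (3 * (k + 1) + 1) = B (3 * (k + 1)) := B_3m1 (k + 1)
      have h2 : 3 * (k + 1) = 3 * k + 3 := by ring
      rw [h1, h2, B_3m3, ih, pow_succ]
      ring

lemma wsum_eq_filter (P : Finset ℕ → Prop) (n : ℕ) :
    wsum P n = ∑ s ∈ (Finset.range n).powerset.filter P, (-1 : ℤ) ^ s.card :=
  (Finset.sum_filter P _).symm

lemma sum_transfer (n : ℕ) (p : ℕ → Prop) :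
    ∑ t ∈ cfilter
        (fun t : Finset (Fin n) =>
          IsIndepFinset (SimpleGraph.pathGraph n) t ∧ ∀ v ∈ t, p (v : ℕ)),
      (-1 : ℤ) ^ t.card
      = wsum (fun s => NC s ∧ ∀ i ∈ s, p i) n := by
  unfold cfilter
  rw [wsum_eq_filter]
  refine Finset.sum_nbij' (i := fun t => t.map Fin.valEmbedding)
      (j := fun s => Finset.univ.filter (fun v : Fin n => (v : ℕ) ∈ s))
      ?_ ?_ ?_ ?_ ?_
  · intro t ht
    simp only [Finset.mem_filter] at ht
    obtain ⟨-, hind, hp⟩ := ht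
    simp only [Finset.mem_filter]
    refine ⟨Finset.mem_powerset.mpr ?_, ?_, ?_⟩
    · intro m hm
      obtain ⟨v, hv, rfl⟩ := Finset.mem_map.mp hm
      exact Finset.mem_range.mpr v.isLt
    · intro i hi1 hi2
      obtain ⟨v, hv, hvi⟩ := Finset.mem_map.mp hi1
      obtain ⟨w, hw, hwi⟩ := Finset.mem_map.mp hi2
      refine hind v hv w hw (SimpleGraph.pathGraph_adj.mpr (Or.inl ?_))
      simp only [Fin.valEmbedding_apply] at hvi hwi
      omega
    · intro i hi1
      obtain ⟨v, hv, rfl⟩ := Finset.mem_map.mp hi1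
      exact hp v hv
  · intro s hs
    simp only [Finset.mem_filter] at hs
    obtain ⟨hsub, hNC, hp⟩ := hs
    have hsub' := Finset.mem_powerset.mp hsub
    simp only [Finset.mem_filter]
    refine ⟨Finset.mem_univ _, ?_, ?_⟩
    · intro a ha b hb hadj
      have ha' : (a : ℕ) ∈ s := (Finset.mem_filter.mp ha).2
      have hb' : (b : ℕ) ∈ s := (Finset.mem_filter.mp hb).2
      rcases SimpleGraph.pathGraph_adj.mp hadj with h | h
      · exact hNC _ ha' (h ▸ hb')
      · exact hNC _ hb' (h ▸ ha')
    · intro v hv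
      exact hp _ hv.2
  · intro t ht
    ext v
    simp only [Finset.mem_filter, Finset.mem_univ, true_and, Finset.mem_map,
      Fin.valEmbedding_apply]
    constructor
    · rintro ⟨w, hw, hwv⟩
      rwa [← Fin.val_injective hwv]
    · intro hv
      exact ⟨v, hv, rfl⟩
  · intro s hs
    simp only [Finset.mem_filter] at hs
    have hsub' := Finset.mem_powerset.mp hs.1
    ext m
    simp only [Finset.mem_map, Finset.mem_filter, Finset.mem_univ, true_and,
      Fin.valEmbedding_apply]
    constructor
    · rintro ⟨v, hv, rfl⟩
      exact hv
    · intro hm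
      exact ⟨⟨m, Finset.mem_range.mp (hsub' hm)⟩, hm, rfl⟩
  · intro t ht
    rw [Finset.card_map]

lemma susp_adj_some_some {V : Type*} (G : SimpleGraph V) (C : Set V) (a b : V) :
    (susp G C).Adj (some a) (some b) ↔ G.Adj a b := Iff.rfl

lemma susp_adj_none_some {V : Type*} (G : SimpleGraph V) (C : Set V) (b : V) :
    (susp G C).Adj none (some b) ↔ b ∈ C := Iff.rfl

lemma susp_sum {V : Type*} [Fintype V] (G : SimpleGraph V) (C : Set V) (x : ℤ) :
    indepPolynomial (susp G C) x
      = indepPolynomial G x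
        + x * ∑ t ∈ cfilter
            (fun t : Finset V => IsIndepFinset G t ∧ ∀ a ∈ t, a ∉ C), x ^ t.card := by
  rw [indepPolynomial]
  rw [← Finset.sum_filter_add_sum_filter_not
    (Finset.univ.filter fun s : Finset (Option V) => IsIndepFinset (susp G C) s)
    (fun s => none ∈ s)]
  have h1 : ∑ s ∈ (Finset.univ.filter fun s : Finset (Option V) =>
        IsIndepFinset (susp G C) s).filter (fun s => ¬ none ∈ s), x ^ s.card
      = indepPolynomial G x := by
    rw [indepPolynomial]
    refine Finset.sum_nbij' (i := fun s => Finset.eraseNone s)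
        (j := fun t => t.map Function.Embedding.some) ?_ ?_ ?_ ?_ ?_
    · intro s hs
      obtain ⟨hs1, -⟩ := Finset.mem_filter.mp hs
      have hind := (Finset.mem_filter.mp hs1).2
      refine Finset.mem_filter.mpr ⟨Finset.mem_univ _, ?_⟩
      intro a ha b hb hadj
      exact hind (some a) (Finset.mem_eraseNone.mp ha)
        (some b) (Finset.mem_eraseNone.mp hb) hadj
    · intro t ht
      have hind := (Finset.mem_filter.mp ht).2
      refine Finset.mem_filter.mpr ⟨Finset.mem_filter.mpr ⟨Finset.mem_univ _, ?_⟩, ?_⟩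
      · rintro (_ | a) ha (_ | b) hb hadj
        · exact hadj
        · obtain ⟨a', ha', h⟩ := Finset.mem_map.mp ha
          exact absurd h (Option.some_ne_none _)
        · obtain ⟨b', hb', h⟩ := Finset.mem_map.mp hb
          exact absurd h (Option.some_ne_none _)
        · obtain ⟨a', ha', ha''⟩ := Finset.mem_map.mp ha
          obtain ⟨b', hb', hb''⟩ := Finset.mem_map.mp hb
          cases ha''; cases hb''
          exact hind _ ha' _ hb' hadj
      · intro hmem
        obtain ⟨a', -, h⟩ := Finset.mem_map.mp hmem
        exact absurd h (Option.some_ne_none _)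
    · intro s hs
      have hnone : none ∉ s := (Finset.mem_filter.mp hs).2
      show Finset.map Function.Embedding.some (Finset.eraseNone s) = s
      rw [Finset.map_some_eraseNone, Finset.erase_eq_of_notMem hnone]
    · intro t ht
      exact Finset.eraseNone_map_some t
    · intro s hs
      have hnone : none ∉ s := (Finset.mem_filter.mp hs).2
      have he : (Finset.eraseNone s).map Function.Embedding.some = s := by
        rw [Finset.map_some_eraseNone, Finset.erase_eq_of_notMem hnone]
      conv_lhs => rw [← he]
      rw [Finset.card_map]
  have h2 : ∑ s ∈ (Finset.univ.filter fun s : Finset (Option V) =>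
        IsIndepFinset (susp G C) s).filter (fun s => none ∈ s), x ^ s.card
      = x * ∑ t ∈ Finset.univ.filter
          (fun t : Finset V => IsIndepFinset G t ∧ ∀ a ∈ t, a ∉ C), x ^ t.card := by
    rw [Finset.mul_sum]
    refine Finset.sum_nbij' (i := fun s => Finset.eraseNone s)
        (j := fun t => Finset.insertNone t) ?_ ?_ ?_ ?_ ?_
    · intro s hs
      obtain ⟨hs1, hmem⟩ := Finset.mem_filter.mp hs
      have hind := (Finset.mem_filter.mp hs1).2
      simp only [Finset.mem_filter]
      refine ⟨Finset.mem_univ _, ?_, ?_⟩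
      · intro a ha b hb hadj
        exact hind (some a) (Finset.mem_eraseNone.mp ha)
          (some b) (Finset.mem_eraseNone.mp hb) hadj
      · intro a ha hC
        exact hind none hmem (some a) (Finset.mem_eraseNone.mp ha) hC
    · intro t ht
      simp only [Finset.mem_filter] at ht
      obtain ⟨-, hind, hC⟩ := ht
      refine Finset.mem_filter.mpr ⟨Finset.mem_filter.mpr ⟨Finset.mem_univ _, ?_⟩, ?_⟩
      · rintro (_ | a) ha (_ | b) hb hadj
        · exact hadj
        · exact hC b (by simpa using Finset.mem_insertNone.mp hb) hadj
        · exact hC a (by simpa using Finset.mem_insertNone.mp ha) hadj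
        · exact hind a (by simpa using Finset.mem_insertNone.mp ha)
            b (by simpa using Finset.mem_insertNone.mp hb) hadj
      · exact Finset.mem_insertNone.mpr (by simp)
    · intro s hs
      have hmem : none ∈ s := (Finset.mem_filter.mp hs).2
      show Finset.insertNone (Finset.eraseNone s) = s
      rw [Finset.insertNone_eraseNone, Finset.insert_eq_self.mpr hmem]
    · intro t ht
      exact Finset.eraseNone_insertNone t
    · intro s hs
      have hmem : none ∈ s := (Finset.mem_filter.mp hs).2
      have he : Finset.insertNone (Finset.eraseNone s) = s := by
        rw [Finset.insertNone_eraseNone, Finset.insert_eq_self.mpr hmem]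
      conv_lhs => rw [← he]
      rw [Finset.card_insertNone, pow_succ]
      ring
  rw [h1, h2, filter_eq_cfilter]
  ring


lemma sumA (n : ℕ) : indepPolynomial (SimpleGraph.pathGraph n) (-1) = A n := by
  rw [indepPolynomial, A]
  have hfe : (Finset.univ.filter fun t : Finset (Fin n) =>
        IsIndepFinset (SimpleGraph.pathGraph n) t)
      = cfilter (fun t : Finset (Fin n) =>
          IsIndepFinset (SimpleGraph.pathGraph n) t ∧ ∀ v ∈ t, True) := by
    unfold cfilter
    exact @Finset.filter_congr _ _ _ _ (fun _ => Classical.propDecidable _) _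
      (fun t _ => by simp)
  rw [hfe, sum_transfer n (fun _ => True)]
  apply wsum_congr
  intro s _
  constructor
  · exact fun h => h.1
  · exact fun h => ⟨h, fun _ _ => trivial⟩

end Stmt17Aux

open Stmt17Aux

theorem stmt17 (k : ℕ) (hk : 1 ≤ k) :
    indepPolynomial
        (susp (SimpleGraph.pathGraph (3 * k + 1))
          {v : Fin (3 * k + 1) | (v : ℕ) % 3 = 0}) (-1) = (-1) ^ (k + 1) ∧
      indepPolynomial
        (susp (SimpleGraph.pathGraph (3 * k + 1))
          {v : Fin (3 * k + 1) | (v : ℕ) % 3 = 0}) (-1) ≠ 0 := by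
  have hmain : indepPolynomial
      (susp (SimpleGraph.pathGraph (3 * k + 1))
        {v : Fin (3 * k + 1) | (v : ℕ) % 3 = 0}) (-1) = (-1) ^ (k + 1) := by
    rw [susp_sum, sumA, A_3k1]
    have hC : cfilter (fun t : Finset (Fin (3 * k + 1)) =>
          IsIndepFinset (SimpleGraph.pathGraph (3 * k + 1)) t ∧
            ∀ a ∈ t, a ∉ {v : Fin (3 * k + 1) | (v : ℕ) % 3 = 0})
        = cfilter (fun t : Finset (Fin (3 * k + 1)) =>
            IsIndepFinset (SimpleGraph.pathGraph (3 * k + 1)) t ∧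
              ∀ v ∈ t, (v : ℕ) % 3 ≠ 0) := by
      unfold cfilter
      exact @Finset.filter_congr _ _ _ (fun _ => Classical.propDecidable _)
        (fun _ => Classical.propDecidable _) _
        (fun t _ => by simp only [Set.mem_setOf_eq, ne_eq])
    rw [hC, sum_transfer (3 * k + 1) (fun i => i % 3 ≠ 0)]
    rw [show wsum (fun s => NC s ∧ ∀ i ∈ s, i % 3 ≠ 0) (3 * k + 1) = B (3 * k + 1) from rfl]
    rw [B_3k1]
    ring
  refine ⟨hmain, ?_⟩
  rw [hmain]
  exact pow_ne_zero _ (by norm_num)
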